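/- For all real numbers μ, ω, t, x and every real σ > 0, the free Gaussian wavepacket I(x,t) = ∫_{ℝ} exp(−(κ−μ)²/(2σ²)) · e^{iκx} · e^{−iωtκ²} dκ satisfies |I(x,t)| = √(2π) · σ · (1 + 4σ⁴ω²t²)^{−1/4} · exp( −(x − 2μωt)² / (2(1/σ² + 4σ²ω²t²)) ). In particular, the modulus of the wavepacket is a Gaussian in x with mean 2μωt and squared width σ_x²(t) = 1/σ² + 4σ²ω²t², so that at t = 0 the spatial spread is Δx = 1/σ and it grows linearly in t for large t. -/

import Mathlib

open MeasureTheory Real Complex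

/-- The free Gaussian wavepacket `I(x,t)`. -/
noncomputable def gaussPacket (μ σ ω t x : ℝ) : ℂ :=
  ∫ κ : ℝ, (Real.exp (-(κ - μ) ^ 2 / (2 * σ ^ 2)) : ℂ) *
    Complex.exp (Complex.I * κ * x) * Complex.exp (-Complex.I * ω * t * κ ^ 2)

/-- The modulus of the free Gaussian wavepacket is a Gaussian in `x` with mean `2μωt`
and squared width `1/σ² + 4σ²ω²t²`. -/
theorem gaussPacket_abs (μ σ ω t x : ℝ) (hσ : 0 < σ) :
    ‖gaussPacket μ σ ω t x‖ =
      Real.sqrt (2 * Real.pi) * σ * (1 + 4 * σ ^ 4 * ω ^ 2 * t ^ 2) ^ (-(1 / 4) : ℝ) *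
        Real.exp (-(x - 2 * μ * ω * t) ^ 2 /
          (2 * (1 / σ ^ 2 + 4 * σ ^ 2 * ω ^ 2 * t ^ 2))) := by
  have hσ2 : (σ : ℝ) ^ 2 ≠ 0 := pow_ne_zero _ hσ.ne'
  have hσc : (σ : ℂ) ≠ 0 := by exact_mod_cast ofReal_ne_zero.mpr hσ.ne'
  set b : ℂ := -(1 / (2 * (σ:ℂ) ^ 2)) - Complex.I * ω * t with hbdef
  set c : ℂ := (μ : ℂ) / σ ^ 2 + Complex.I * x with hcdef
  set d : ℂ := -(μ : ℂ) ^ 2 / (2 * σ ^ 2) with hddef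
  have hbre : b.re < 0 := by
    have : b.re = -(1 / (2 * σ ^ 2)) := by
      simp [hbdef, ← Complex.ofReal_pow]
    rw [this]
    simp [div_pos Real.pi_pos]; positivity
  have key : gaussPacket μ σ ω t x =
      (↑π / -b) ^ (1 / 2 : ℂ) * Complex.exp (d - c ^ 2 / (4 * b)) := by
    rw [gaussPacket, ← integral_cexp_quadratic hbre c d]
    congr 1; ext κ
    rw [Complex.ofReal_exp, ← Complex.exp_add, ← Complex.exp_add]
    congr 1
    push_cast
    have hmul : (σ:ℂ)^2 * ((σ:ℂ))⁻¹^2 = 1 := by field_simp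
    field_simp
    linear_combination ((κ:ℂ) - (μ:ℂ))^2 * hmul
  have hD : (0:ℝ) < 1 + 4 * σ ^ 4 * ω ^ 2 * t ^ 2 := by positivity
  have habsb : ‖-b‖ = Real.sqrt (1 + 4 * σ ^ 4 * ω ^ 2 * t ^ 2) / (2 * σ ^ 2) := by
    rw [Complex.norm_def]
    have hn : Complex.normSq (-b) = (1 + 4 * σ ^ 4 * ω ^ 2 * t ^ 2) / (4 * σ ^ 4) := by
      rw [hbdef]
      simp only [pow_two]
      simp [Complex.normSq_apply, Complex.div_re, Complex.div_im]
      field_simp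
      ring
    rw [hn, Real.sqrt_div hD.le, show (4 * σ ^ 4 : ℝ) = (2 * σ ^ 2) ^ 2 by ring,
      Real.sqrt_sq (by positivity)]
  have habs : ‖(π : ℂ) / -b‖ =
      2 * π * σ ^ 2 / Real.sqrt (1 + 4 * σ ^ 4 * ω ^ 2 * t ^ 2) := by
    rw [norm_div, Complex.norm_real, Real.norm_eq_abs, abs_of_pos Real.pi_pos, habsb]
    rw [div_div_eq_mul_div]
    ring
  have hre : (d - c ^ 2 / (4 * b)).re =
      -(x - 2 * μ * ω * t) ^ 2 / (2 * (1 / σ ^ 2 + 4 * σ ^ 2 * ω ^ 2 * t ^ 2)) := by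
    rw [hddef, hcdef, hbdef]
    have h4 : ((4:ℝ) * 4 + 4 * (ω * t) * (4 * (ω * t)) * (σ * σ * 2 * (σ * σ * 2)) : ℝ) ≠ 0 := by
      nlinarith [sq_nonneg (ω*t*(σ*σ))]
    have h5 : ((1:ℝ) + 4 * (σ * σ) * (ω * ω) * (t * t) * (σ * σ) : ℝ) ≠ 0 := by
      nlinarith [sq_nonneg (σ*σ*ω*t)]
    simp only [pow_two]
    simp [Complex.div_re, Complex.normSq_apply, Complex.div_im]
    field_simp
    ring
  rw [key, norm_mul, Complex.norm_exp, hre,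
    show (1/2 : ℂ) = ((1/2 : ℝ) : ℂ) by norm_num, Complex.norm_cpow_real, habs]
  congr 1
  have e1 : ((1 + 4*σ^4*ω^2*t^2 : ℝ)) ^ (-(1/4) : ℝ) =
      (Real.sqrt (1 + 4*σ^4*ω^2*t^2)) ^ (-(1/2) : ℝ) := by
    rw [Real.sqrt_eq_rpow, ← Real.rpow_mul hD.le]
    norm_num
  have e2 : ((2*π*σ^2 : ℝ)) ^ ((1/2 : ℝ)) = Real.sqrt (2*π) * σ := by
    rw [← Real.sqrt_eq_rpow, Real.sqrt_mul (by positivity), Real.sqrt_sq hσ.le]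
  rw [e1, Real.rpow_neg (Real.sqrt_nonneg _),
    Real.div_rpow (by positivity) (Real.sqrt_nonneg _), e2, div_eq_mul_inv]
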